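/- Let dν be a finite positive Borel measure on the closed unit disk. If both ξ = 0 and some η in the open unit disk renormalize dν (i.e., ∫ X_s ∘ d_η dν = 0 and ∫ X_s dν = 0 for all directions s ∈ S¹, where X_s(z) = f(|z|)·(z·s)/|z| with f monotone increasing, positive on (0,1], f(0)=0), then η = 0. -/

import Mathlib

open Complex Metric MeasureTheory

/-- The Möbius transformation `d_ξ(z) = (z+ξ)/(conj ξ · z + 1)` of the unit disk. -/
noncomputable def diskMobius (ξ z : ℂ) : ℂ := (z + ξ) / ((starRingEnd ℂ) ξ * z + 1)

/-- `X_s(z) = f(|z|)·(z·s)/|z|`, where `z·s` is the Euclidean inner product of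
`z, s ∈ ℝ² ≅ ℂ`; by convention `X_s(0) = 0`. -/
noncomputable def dirEigenfunction (f : ℝ → ℝ) (s z : ℂ) : ℝ :=
  if z = 0 then 0
  else f ‖z‖ * (z.re * s.re + z.im * s.im) / ‖z‖

lemma sq_abs' (z : ℂ) : ‖z‖ ^ 2 = z.re ^ 2 + z.im ^ 2 := by
  rw [Complex.sq_norm, Complex.normSq_apply]; ring

lemma mobius_denom_ne (η z : ℂ) (hη : ‖η‖ < 1) (hz : ‖z‖ < 1) :
    (starRingEnd ℂ) η * z + 1 ≠ 0 := by
  intro h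
  have h1 : ‖(starRingEnd ℂ) η * z‖ = ‖η‖ * ‖z‖ := by
    simp [map_mul]
  have h2 : ‖η‖ * ‖z‖ < 1 := by
    nlinarith [norm_nonneg η, norm_nonneg z]
  have : (starRingEnd ℂ) η * z = -1 := by linear_combination h
  rw [this] at h1
  simp at h1
  nlinarith

lemma mobius_abs_lt (η z : ℂ) (hη : ‖η‖ < 1) (hz : ‖z‖ < 1) :
    ‖diskMobius η z‖ < 1 := by
  have hd := mobius_denom_ne η z hη hz
  rw [diskMobius, norm_div]
  rw [div_lt_one (norm_pos_iff.mpr hd)]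
  have h1 : Complex.normSq (z + η) < Complex.normSq ((starRingEnd ℂ) η * z + 1) := by
    simp only [Complex.normSq_apply, Complex.add_re, Complex.add_im, Complex.mul_re,
      Complex.mul_im, Complex.conj_re, Complex.conj_im, Complex.one_re, Complex.one_im]
    have hz2 : z.re^2 + z.im^2 < 1 := by nlinarith [sq_abs' z, norm_nonneg z]
    have hη2 : η.re^2 + η.im^2 < 1 := by nlinarith [sq_abs' η, norm_nonneg η]
    nlinarith
  have e1 := Complex.sq_norm (z + η)
  have e2 := Complex.sq_norm ((starRingEnd ℂ) η * z + 1)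
  nlinarith [norm_nonneg (z + η), norm_nonneg ((starRingEnd ℂ) η * z + 1)]

lemma sqlt_aux {a b : ℝ} (hb : 0 ≤ b) (h : a^2 < b^2) (ha : 0 ≤ a) : a < b := by nlinarith

lemma sqle_aux {a b : ℝ} (hb : 0 ≤ b) (h : a^2 ≤ b^2) (ha : 0 ≤ a) : a ≤ b := by nlinarith

lemma real1 (t x y : ℝ) (ht0 : 0 < t) (hr : x^2+y^2 < 1) (hx : 0 ≤ x) :
    (x^2+y^2)*((t*x+1)^2+(t*y)^2) < (x+t)^2+y^2 := by
  have key : ((x+t)^2+y^2) - (x^2+y^2)*((t*x+1)^2+(t*y)^2)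
      = t*(1-(x^2+y^2))*(2*x+t*(1+(x^2+y^2))) := by ring
  nlinarith [mul_pos (mul_pos ht0 (by linarith : (0:ℝ) < 1-(x^2+y^2)))
    (by nlinarith : (0:ℝ) < 2*x+t*(1+(x^2+y^2)))]

lemma real2 (t x y : ℝ) (ht0 : 0 < t) (hx : 0 ≤ x) :
    x^2*(((x+t)^2+y^2)*((t*x+1)^2+(t*y)^2))
      ≤ (t*(1+(x^2+y^2))+(1+t^2)*x)^2*(x^2+y^2) := by
  have hiden : (t*(1+(x^2+y^2))+(1+t^2)*x)^2*(x^2+y^2)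
      - x^2*(((x+t)^2+y^2)*((t*x+1)^2+(t*y)^2))
      = y^2*t*(t*((1+(x^2+y^2))^2+4*x^2) + 2*x*(1+t^2)*(1+(x^2+y^2))) := by ring
  have hQ : 0 ≤ t*((1+(x^2+y^2))^2+4*x^2) + 2*x*(1+t^2)*(1+(x^2+y^2)) := by
    have h1 : 0 ≤ t*((1+(x^2+y^2))^2+4*x^2) := by positivity
    have h2 : 0 ≤ 2*x*(1+t^2)*(1+(x^2+y^2)) := by positivity
    linarith
  nlinarith [mul_nonneg (mul_nonneg (sq_nonneg y) ht0.le) hQ]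

lemma real3 (t x y : ℝ) (ht0 : 0 < t) (ht1 : t < 1) (hr : x^2+y^2 < 1)
    (hA : t*(1+(x^2+y^2))+(1+t^2)*x < 0) :
    (x+t)^2+y^2 < (x^2+y^2)*((t*x+1)^2+(t*y)^2) := by
  have hrr : (0:ℝ) < 1+(x^2+y^2) := by positivity
  have h2xt : 2*x+t*(1+(x^2+y^2)) < 0 := by
    nlinarith [mul_pos (mul_pos ht0 hrr) (by nlinarith : (0:ℝ) < 1 - t^2),
      (by positivity : (0:ℝ) < 1+t^2), hA]
  have key : ((x+t)^2+y^2) - (x^2+y^2)*((t*x+1)^2+(t*y)^2)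
      = t*(1-(x^2+y^2))*(2*x+t*(1+(x^2+y^2))) := by ring
  nlinarith [mul_pos (mul_pos ht0 (by linarith : (0:ℝ) < 1-(x^2+y^2)))
    (by linarith : (0:ℝ) < -(2*x+t*(1+(x^2+y^2))))]

lemma real4 (t x y : ℝ) (ht0 : 0 < t) (ht1 : t < 1) (hr : x^2+y^2 < 1) (hx : x < 0)
    (hA : t*(1+(x^2+y^2))+(1+t^2)*x < 0) :
    (t*(1+(x^2+y^2))+(1+t^2)*x)^2*(x^2+y^2)
      ≤ x^2*(((x+t)^2+y^2)*((t*x+1)^2+(t*y)^2)) := by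
  have hiden : (t*(1+(x^2+y^2))+(1+t^2)*x)^2*(x^2+y^2)
      - x^2*(((x+t)^2+y^2)*((t*x+1)^2+(t*y)^2))
      = y^2*t*((1+(x^2+y^2))*(t*(1+(x^2+y^2))+(1+t^2)*x)
        + x*((1+t^2)*(1+(x^2+y^2)) + 4*t*x)) := by ring
  have hx2 : x^2 < 1 := by nlinarith [sq_nonneg y]
  have hB : 0 < (1+t^2)*(1+(x^2+y^2)) + 4*t*x := by
    nlinarith [sq_nonneg ((1+t^2)*x + 2*t), sq_nonneg (1-t^2), sq_nonneg y,
      mul_pos ht0 ht0]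
  have hQ : (1+(x^2+y^2))*(t*(1+(x^2+y^2))+(1+t^2)*x)
      + x*((1+t^2)*(1+(x^2+y^2)) + 4*t*x) ≤ 0 := by
    nlinarith [mul_pos (neg_pos.mpr hx) hB,
      mul_pos (by positivity : (0:ℝ) < 1+(x^2+y^2)) (neg_pos.mpr hA)]
  nlinarith [mul_nonneg (mul_nonneg (sq_nonneg y) ht0.le) (neg_nonneg.mpr hQ)]

lemma dirEigen_one (f : ℝ → ℝ) (z : ℂ) :
    dirEigenfunction f 1 z = if z = 0 then 0 else f (‖z‖) * z.re / ‖z‖ := by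
  simp [dirEigenfunction]

lemma coreIneq (f : ℝ → ℝ)
    (hmono : StrictMonoOn f (Set.Icc 0 1))
    (hf0 : f 0 = 0) (hfpos : ∀ x ∈ Set.Ioc (0 : ℝ) 1, 0 < f x)
    (t : ℝ) (ht0 : 0 < t) (ht1 : t < 1) (u : ℂ) (hu : ‖u‖ < 1) :
    dirEigenfunction f 1 u < dirEigenfunction f 1 (diskMobius (t : ℂ) u) := by
  have htabs : ‖(t : ℂ)‖ = t := by
    rw [Complex.norm_of_nonneg ht0.le]
  have htabs1 : ‖(t : ℂ)‖ < 1 := by rw [htabs]; exact ht1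
  have hconj : (starRingEnd ℂ) (t : ℂ) = (t : ℂ) := Complex.conj_ofReal t
  have hd : ((t : ℂ) * u + 1) ≠ 0 := by
    have := mobius_denom_ne (t : ℂ) u htabs1 hu
    rwa [hconj] at this
  have habslt : ‖diskMobius (t : ℂ) u‖ < 1 := mobius_abs_lt _ _ htabs1 hu
  have hmob : diskMobius (t : ℂ) u = (u + (t : ℂ)) / ((t : ℂ) * u + 1) := by
    rw [diskMobius, hconj]
  rw [hmob] at habslt ⊢
  set x := u.re with hxdef
  set y := u.im with hydef
  have hr0 : 0 ≤ ‖u‖ := norm_nonneg u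
  set r := ‖u‖ with hrdef
  have hr1 : r < 1 := hu
  have hr2 : r ^ 2 = x ^ 2 + y ^ 2 := sq_abs' u
  have hr2lt : x ^ 2 + y ^ 2 < 1 := by nlinarith
  set nsd : ℝ := (t*x+1)^2 + (t*y)^2 with hnsddef
  set nsn : ℝ := (x+t)^2 + y^2 with hnsndef
  set A : ℝ := t*(1+(x^2+y^2)) + (1+t^2)*x with hAdef
  have hdre : ((t : ℂ) * u + 1).re = t*x+1 := by simp [Complex.add_re, Complex.mul_re, hxdef]
  have hdim : ((t : ℂ) * u + 1).im = t*y := by simp [Complex.add_im, Complex.mul_im, hydef]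
  have hnsd : Complex.normSq ((t : ℂ) * u + 1) = nsd := by
    rw [Complex.normSq_apply, hdre, hdim]; ring
  have hnsd_pos : 0 < nsd := by
    rw [← hnsd]; exact Complex.normSq_pos.mpr hd
  have hnsn : Complex.normSq (u + (t : ℂ)) = nsn := by
    rw [Complex.normSq_apply]
    simp only [Complex.add_re, Complex.add_im, Complex.ofReal_re, Complex.ofReal_im,
      ← hxdef, ← hydef, add_zero]
    ring
  set w : ℂ := (u + (t : ℂ)) / ((t : ℂ) * u + 1) with hw_eq
  have hR0 : 0 ≤ ‖w‖ := norm_nonneg w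
  set R := ‖w‖ with hRdef
  have hR1 : R < 1 := habslt
  have hX : w.re = A / nsd := by
    rw [hw_eq, Complex.div_re, hnsd, hdre, hdim]
    simp only [Complex.add_re, Complex.add_im, Complex.ofReal_re, Complex.ofReal_im,
      ← hxdef, ← hydef, add_zero]
    field_simp
    ring
  have hR2 : R ^ 2 = nsn / nsd := by
    rw [hRdef, hw_eq, norm_div, div_pow, Complex.sq_norm, Complex.sq_norm, hnsd, hnsn]
  have hwt0 : u = 0 → w = (t : ℂ) := by intro h; rw [hw_eq, h]; simp
  have hwu : w = 0 → u = -(t : ℂ) := by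
    intro h
    rw [hw_eq, div_eq_zero_iff] at h
    rcases h with h | h
    · exact eq_neg_of_add_eq_zero_left h
    · exact absurd h hd
  clear_value w
  clear hw_eq
  have hnsd2 : (0:ℝ) < nsd ^ 2 := pow_pos hnsd_pos 2
  clear_value x y r R nsd nsn A
  by_cases hu0 : u = 0
  · have hwt := hwt0 hu0
    subst hu0
    rw [dirEigen_one, dirEigen_one]
    rw [if_pos rfl, if_neg (by rw [hwt]; exact_mod_cast (ne_of_gt ht0))]
    rw [hwt, htabs]
    simp only [Complex.ofReal_re]
    rw [mul_div_assoc, div_self (ne_of_gt ht0), mul_one]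
    exact hfpos t ⟨ht0, le_of_lt ht1⟩
  · have hrpos : 0 < r := by rw [hrdef]; exact norm_pos_iff.mpr hu0
    have hfr : 0 < f r := hfpos r ⟨hrpos, le_of_lt hr1⟩
    by_cases hw0 : w = 0
    · have hut := hwu hw0
      rw [dirEigen_one, dirEigen_one, if_pos hw0, if_neg hu0]
      rw [← hrdef, ← hxdef]
      have hrt : r = t := by rw [hrdef, hut]; simpa using htabs
      have hxt : x = -t := by rw [hxdef, hut]; simp
      rw [hrt, hxt]
      have hft : 0 < f t := hfpos t ⟨ht0, le_of_lt ht1⟩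
      rw [mul_div_assoc]
      have h1 : -t / t = -1 := by field_simp
      rw [h1]
      nlinarith
    · have hRpos : 0 < R := by rw [hRdef]; exact norm_pos_iff.mpr hw0
      rw [dirEigen_one, dirEigen_one, if_neg hu0, if_neg hw0]
      rw [← hrdef, ← hRdef, ← hxdef, mul_div_assoc, mul_div_assoc]
      have hfR0 : 0 < f R := hfpos R ⟨hRpos, le_of_lt hR1⟩
      by_cases hx : 0 ≤ x
      · have hApos : 0 < A := by
          have h1 : 0 ≤ (1+t^2)*x := by positivity
          have h2 : 0 < t*(1+(x^2+y^2)) := by positivity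
          rw [hAdef]; linarith
        have hXpos : 0 < w.re := by rw [hX]; exact div_pos hApos hnsd_pos
        have hRr : r < R := by
          apply sqlt_aux hR0 _ hr0
          rw [hr2, hR2, lt_div_iff₀ hnsd_pos]
          rw [hnsndef, hnsddef]
          exact real1 t x y ht0 hr2lt hx
        have hfRr : f r < f R := hmono ⟨hr0, le_of_lt hr1⟩ ⟨hR0, le_of_lt hR1⟩ hRr
        have hcc : x / r ≤ w.re / R := by
          rw [div_le_div_iff₀ hrpos hRpos]
          apply sqle_aux (mul_nonneg hXpos.le hrpos.le) _ (mul_nonneg hx hR0)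
          have hsq := real2 t x y ht0 hx
          rw [← hnsndef, ← hnsddef, ← hAdef] at hsq
          have e3 : (x*R)^2*nsd^2 = x^2*((nsn*nsd)) := by
            rw [mul_pow, hR2]; field_simp; try ring
          have e4 : (w.re*r)^2*nsd^2 = A^2*(x^2+y^2) := by
            rw [mul_pow, hX, hr2, div_pow]; field_simp; try ring
          have h5 : (x*R)^2 * nsd^2 ≤ (w.re*r)^2 * nsd^2 := by
            rw [e3, e4]; exact hsq
          exact le_of_mul_le_mul_right h5 hnsd2
        calc f r * (x / r) ≤ f r * (w.re / R) :=
              mul_le_mul_of_nonneg_left hcc (le_of_lt hfr)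
          _ < f R * (w.re / R) :=
              mul_lt_mul_of_pos_right hfRr (div_pos hXpos hRpos)
      · push_neg at hx
        by_cases hA : 0 ≤ A
        · have hXnn : 0 ≤ w.re := by rw [hX]; exact div_nonneg hA hnsd_pos.le
          have hlhs : f r * (x / r) < 0 :=
            mul_neg_of_pos_of_neg hfr (div_neg_of_neg_of_pos hx hrpos)
          have hrhs : 0 ≤ f R * (w.re / R) :=
            mul_nonneg hfR0.le (div_nonneg hXnn hR0)
          linarith
        · push_neg at hA
          have hXneg : w.re < 0 := by
            rw [hX]; exact div_neg_of_neg_of_pos hA hnsd_pos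
          have hRr : R < r := by
            apply sqlt_aux hr0 _ hR0
            rw [hr2, hR2, div_lt_iff₀ hnsd_pos]
            rw [hnsndef, hnsddef]
            exact real3 t x y ht0 ht1 hr2lt (by rw [hAdef] at hA; exact hA)
          have hfRr : f R < f r := hmono ⟨hR0, le_of_lt hR1⟩ ⟨hr0, le_of_lt hr1⟩ hRr
          have hcc : x / r ≤ w.re / R := by
            rw [div_le_div_iff₀ hrpos hRpos]
            have hkey : (w.re * r)^2 ≤ (x * R)^2 := by
              have hsq := real4 t x y ht0 ht1 hr2lt hx (by rw [hAdef] at hA; exact hA)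
              rw [← hnsndef, ← hnsddef, ← hAdef] at hsq
              have e3 : (x*R)^2*nsd^2 = x^2*((nsn*nsd)) := by
                rw [mul_pow, hR2]; field_simp; try ring
              have e4 : (w.re*r)^2*nsd^2 = A^2*(x^2+y^2) := by
                rw [mul_pow, hX, hr2, div_pow]; field_simp; try ring
              have h5 : (w.re*r)^2 * nsd^2 ≤ (x*R)^2 * nsd^2 := by
                rw [e3, e4]; exact hsq
              exact le_of_mul_le_mul_right h5 hnsd2
            have hkey2 : (-w.re * r)^2 ≤ (-x * R)^2 := by
              have e : (-w.re * r)^2 = (w.re * r)^2 := by ring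
              have e2 : (-x * R)^2 = (x * R)^2 := by ring
              rw [e, e2]; exact hkey
            have hxneg : (0:ℝ) ≤ -x := by linarith
            have hwneg : (0:ℝ) ≤ -w.re := by linarith
            have h1 : -w.re * r ≤ -x * R :=
              sqle_aux (mul_nonneg hxneg hR0) hkey2 (mul_nonneg hwneg hrpos.le)
            linarith
          calc f r * (x / r) < f R * (x / r) :=
                mul_lt_mul_of_neg_right hfRr (div_neg_of_neg_of_pos hx hrpos)
            _ ≤ f R * (w.re / R) := mul_le_mul_of_nonneg_left hcc (le_of_lt hfR0)

-- rotation invariance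
lemma dirEigen_rot (f : ℝ → ℝ) (s w : ℂ) (hs : ‖s‖ = 1) :
    dirEigenfunction f s (s * w) = dirEigenfunction f 1 w := by
  have hs0 : s ≠ 0 := by
    intro h; rw [h] at hs; simp at hs
  have hnorm : s.re^2 + s.im^2 = 1 := by
    have h := sq_abs' s; rw [hs] at h; rw [← h]; norm_num
  by_cases hw : w = 0
  · simp [dirEigenfunction, hw]
  · have hsw : s * w ≠ 0 := mul_ne_zero hs0 hw
    rw [dirEigenfunction, dirEigenfunction, if_neg hsw, if_neg hw]
    have habs : ‖s*w‖ = ‖w‖ := by rw [norm_mul, hs, one_mul]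
    have key : (s*w).re*s.re + (s*w).im*s.im = w.re := by
      simp only [Complex.mul_re, Complex.mul_im]
      linear_combination w.re * hnorm
    rw [habs, key, Complex.one_re, Complex.one_im]
    ring_nf

-- Möbius decomposition
lemma mobius_decomp (t : ℝ) (s z : ℂ) (hs : ‖s‖ = 1) :
    diskMobius ((t:ℂ)*s) z = s * diskMobius (t:ℂ) ((starRingEnd ℂ) s * z) := by
  have hss : s * (starRingEnd ℂ) s = 1 := by
    rw [Complex.mul_conj]
    norm_cast
    rw [← Complex.sq_norm, hs]; norm_num
  rw [diskMobius, diskMobius, map_mul, Complex.conj_ofReal]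
  rw [show (t:ℂ) * ((starRingEnd ℂ) s * z) = (t:ℂ) * (starRingEnd ℂ) s * z from
    (mul_assoc _ _ _).symm]
  rw [← mul_div_assoc]
  congr 1
  linear_combination (-z) * hss

-- bound
lemma dirEigen_bound (f : ℝ → ℝ) (hmono : StrictMonoOn f (Set.Icc 0 1))
    (hfpos : ∀ x ∈ Set.Ioc (0 : ℝ) 1, 0 < f x)
    (s z : ℂ) (hs : ‖s‖ = 1) (hz : ‖z‖ < 1) :
    |dirEigenfunction f s z| ≤ f 1 := by
  have hf1 : 0 < f 1 := hfpos 1 ⟨one_pos, le_refl 1⟩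
  by_cases hz0 : z = 0
  · rw [dirEigenfunction, if_pos hz0]; simp; linarith
  · rw [dirEigenfunction, if_neg hz0]
    have hr : 0 < ‖z‖ := norm_pos_iff.mpr hz0
    have hfr : 0 < f (‖z‖) := hfpos _ ⟨hr, hz.le⟩
    have hinner : |z.re*s.re + z.im*s.im| ≤ ‖z‖ := by
      have he : z.re*s.re + z.im*s.im = (z * (starRingEnd ℂ) s).re := by
        simp only [Complex.mul_re, Complex.conj_re, Complex.conj_im]
        ring
      rw [he]
      calc |(z * (starRingEnd ℂ) s).re| ≤ ‖z * (starRingEnd ℂ) s‖ :=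
            Complex.abs_re_le_norm _
        _ = ‖z‖ := by rw [norm_mul, Complex.norm_conj, hs, mul_one]
    have hle : f (‖z‖) ≤ f 1 :=
      (hmono.monotoneOn ⟨hr.le, hz.le⟩ ⟨zero_le_one, le_refl 1⟩ hz.le)
    rw [abs_div, abs_mul, abs_of_pos hfr, abs_of_pos hr]
    rw [div_le_iff₀ hr]
    calc f (‖z‖) * |z.re*s.re + z.im*s.im|
        ≤ f (‖z‖) * ‖z‖ := by
          exact mul_le_mul_of_nonneg_left hinner hfr.le
      _ ≤ f 1 * ‖z‖ := mul_le_mul_of_nonneg_right hle hr.le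

-- measurability of truncated version
lemma dirEigen_meas (F : ℝ → ℝ) (hF : Continuous F) (s : ℂ) :
    Measurable (dirEigenfunction F s) := by
  have h1 : Measurable fun z : ℂ =>
      F (‖z‖) * (z.re * s.re + z.im * s.im) / ‖z‖ := by
    apply Measurable.div
    · exact ((hF.comp continuous_norm).mul
        ((Complex.continuous_re.mul continuous_const).add
          (Complex.continuous_im.mul continuous_const))).measurable
    · exact continuous_norm.measurable
  exact Measurable.ite (measurableSet_eq) measurable_const h1

lemma mobius_meas (η : ℂ) : Measurable (diskMobius η) := by
  apply Measurable.div
  · exact (measurable_id.add_const η)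
  · exact ((measurable_id.const_mul _).add_const 1)

lemma unit_mul_conj (s : ℂ) (hs : ‖s‖ = 1) : s * (starRingEnd ℂ) s = 1 := by
  rw [Complex.mul_conj]
  norm_cast
  rw [← Complex.sq_norm, hs]; norm_num

/-- if a finite nonzero positive Borel measure on the (open) unit disk is
renormalized both by `ξ = 0` and by `d_η` for some `η` in the disk, then `η = 0`. -/
theorem renormalizing_point_unique (f : ℝ → ℝ)
    (hcont : ContinuousOn f (Set.Icc 0 1))
    (hmono : StrictMonoOn f (Set.Icc 0 1))
    (hf0 : f 0 = 0) (hfpos : ∀ x ∈ Set.Ioc (0 : ℝ) 1, 0 < f x)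
    (ν : Measure ℂ) [IsFiniteMeasure ν] (hν : ν ≠ 0)
    (hsupp : ν (ball (0 : ℂ) 1)ᶜ = 0)
    (η : ℂ) (hη : η ∈ ball (0 : ℂ) 1)
    (hren0 : ∀ s : ℂ, ‖s‖ = 1 → ∫ z, dirEigenfunction f s z ∂ν = 0)
    (hrenη : ∀ s : ℂ, ‖s‖ = 1 →
      ∫ z, dirEigenfunction f s (diskMobius η z) ∂ν = 0) :
    η = 0 := by
  by_contra hη0
  have hηabs : ‖η‖ < 1 := by
    have h := mem_ball_zero_iff.mp hη
    exact h
  set t : ℝ := ‖η‖ with htdef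
  have ht0 : 0 < t := norm_pos_iff.mpr hη0
  have ht1 : t < 1 := hηabs
  set s : ℂ := η / (t : ℂ) with hsdef
  have htne : (t : ℂ) ≠ 0 := by exact_mod_cast ht0.ne'
  have hs : ‖s‖ = 1 := by
    rw [hsdef, norm_div, Complex.norm_of_nonneg ht0.le, ← htdef, div_self ht0.ne']
  have hts : (t : ℂ) * s = η := by rw [hsdef]; field_simp
  have hss : s * (starRingEnd ℂ) s = 1 := unit_mul_conj s hs
  -- pointwise strict inequality on the disk
  have hpoint : ∀ z : ℂ, ‖z‖ < 1 →
      dirEigenfunction f s z < dirEigenfunction f s (diskMobius η z) := by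
    intro z hz
    have hu : ‖(starRingEnd ℂ) s * z‖ = ‖z‖ := by
      rw [norm_mul, Complex.norm_conj, hs, one_mul]
    have hzz : s * ((starRingEnd ℂ) s * z) = z := by
      rw [← mul_assoc, hss, one_mul]
    have hz1 : dirEigenfunction f s z = dirEigenfunction f 1 ((starRingEnd ℂ) s * z) := by
      conv_lhs => rw [← hzz]
      exact dirEigen_rot f s _ hs
    have hz2 : dirEigenfunction f s (diskMobius η z)
        = dirEigenfunction f 1 (diskMobius (t : ℂ) ((starRingEnd ℂ) s * z)) := by
      rw [← hts, mobius_decomp t s z hs, dirEigen_rot f s _ hs]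
    rw [hz1, hz2]
    exact coreIneq f hmono hf0 hfpos t ht0 ht1 _ (by rw [hu]; exact hz)
  -- a.e. membership in the ball
  have hae : ∀ᵐ z ∂ν, ‖z‖ < 1 := by
    rw [ae_iff]
    have he : {z : ℂ | ¬ ‖z‖ < 1} = (ball (0 : ℂ) 1)ᶜ := by
      ext z
      simp [mem_ball, Complex.dist_eq]
    rw [he]; exact hsupp
  -- continuous truncation of f
  set F : ℝ → ℝ := fun a => f (max 0 (min a 1)) with hFdef
  have hFcont : Continuous F := by
    apply hcont.comp_continuous
      (continuous_const.max (continuous_id.min continuous_const))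
    intro a
    exact ⟨le_max_left _ _, max_le zero_le_one (min_le_right _ _)⟩
  have hFeq : ∀ z : ℂ, ‖z‖ ≤ 1 → dirEigenfunction F s z = dirEigenfunction f s z := by
    intro z hz
    rw [dirEigenfunction, dirEigenfunction]
    have hFz : F (‖z‖) = f (‖z‖) := by
      rw [hFdef]
      simp only []
      congr 1
      rw [min_eq_left hz, max_eq_right (norm_nonneg z)]
    rw [hFz]
  have hmeas0 : Measurable (dirEigenfunction F s) := dirEigen_meas F hFcont s
  have hmeasM : Measurable (diskMobius η) := mobius_meas η
  have hae0 : (fun z => dirEigenfunction F s z) =ᵐ[ν] fun z => dirEigenfunction f s z := by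
    filter_upwards [hae] with z hz using hFeq z hz.le
  have hae1 : (fun z => dirEigenfunction F s (diskMobius η z))
      =ᵐ[ν] fun z => dirEigenfunction f s (diskMobius η z) := by
    filter_upwards [hae] with z hz using hFeq _ (mobius_abs_lt η z hηabs hz).le
  have hsm0 : AEStronglyMeasurable (fun z => dirEigenfunction f s z) ν :=
    hmeas0.aestronglyMeasurable.congr hae0
  have hsm1 : AEStronglyMeasurable (fun z => dirEigenfunction f s (diskMobius η z)) ν :=
    ((hmeas0.comp hmeasM).aestronglyMeasurable).congr hae1
  have hint0 : Integrable (fun z => dirEigenfunction f s z) ν := by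
    apply Integrable.mono' (integrable_const (f 1)) hsm0
    filter_upwards [hae] with z hz
    rw [Real.norm_eq_abs]
    exact dirEigen_bound f hmono hfpos s z hs hz
  have hint1 : Integrable (fun z => dirEigenfunction f s (diskMobius η z)) ν := by
    apply Integrable.mono' (integrable_const (f 1)) hsm1
    filter_upwards [hae] with z hz
    rw [Real.norm_eq_abs]
    exact dirEigen_bound f hmono hfpos s _ hs (mobius_abs_lt η z hηabs hz)
  have hzero : ∫ z, (dirEigenfunction f s (diskMobius η z) - dirEigenfunction f s z) ∂ν = 0 := by
    rw [integral_sub hint1 hint0, hrenη s hs, hren0 s hs, sub_zero]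
  have hnn : 0 ≤ᵐ[ν]
      fun z => dirEigenfunction f s (diskMobius η z) - dirEigenfunction f s z := by
    filter_upwards [hae] with z hz
    have := hpoint z hz
    simp only [Pi.zero_apply]
    linarith
  have heq0 := (integral_eq_zero_iff_of_nonneg_ae hnn (hint1.sub hint0)).mp hzero
  have hfalse : ∀ᵐ z ∂ν, False := by
    filter_upwards [heq0, hae] with z h1 h2
    have := hpoint z h2
    simp only [Pi.zero_apply] at h1
    linarith
  have huniv : ν Set.univ = 0 := by
    have h := ae_iff.mp hfalse
    simpa using h
  exact hν (Measure.measure_univ_eq_zero.mp huniv)
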